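/- There exists a constant c₀ > 0, depending only on d, such that uniformly for all balls ℬ = ℬ(z̄, e, r, r*), the pair of sets (π(ℬ), π*(ℬ)) satisfies 𝒯(π(ℬ), π*(ℬ)) ≥ c₀ |π(ℬ)|^{d/(d+1)} |π*(ℬ)|^{d/(d+1)}; that is, (π(ℬ), π*(ℬ)) is c₀-quasiextremal for the restricted weak type inequality for T. -/

import Mathlib

open MeasureTheory ENNReal
open scoped RealInnerProductSpace

noncomputable section

/-- `ℝ^{d-1}` -/
abbrev Vec (n : ℕ) : Type := EuclideanSpace ℝ (Fin n)

/-- `ℝ^d = ℝ^{d-1} × ℝ`, a point `x = (x', x_d)` -/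
abbrev Pt (n : ℕ) : Type := Vec n × ℝ

/-- The Radon-like transform `Tf(x) = ∫_{ℝ^{d-1}} f(x' - t, x_d - |t|²) dt`. -/
def radonT (n : ℕ) (f : Pt n → ℝ≥0∞) (x : Pt n) : ℝ≥0∞ :=
  ∫⁻ t : Vec n, f (x.1 - t, x.2 - ‖t‖ ^ 2)

/-- The incidence functional `𝒯(E, E*) = ∫_E T(χ_{E*})`. -/
def incT (n : ℕ) (E Estar : Set (Pt n)) : ℝ≥0∞ :=
  ∫⁻ x in E, radonT n (Estar.indicator 1) x

/-- Admissibility of the parameters of a ball `ℬ(z̄, e, r, r*)`: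
the center `z̄ = (x̄, x̄*)` lies on the incidence manifold `ℐ`, `ρ > 0`,
`e` is an orthonormal basis of `ℝ^{d-1}`, and `r_j r*_j = ρ > 0` for all `j`. -/
def IsBallParams (n : ℕ) (zb : Pt n × Pt n) (e : Fin n → Vec n)
    (r rs : Fin n → ℝ) (ρ : ℝ) : Prop :=
  zb.2.2 = zb.1.2 - ‖zb.2.1 - zb.1.1‖ ^ 2 ∧ 0 < ρ ∧ Orthonormal ℝ e ∧
    (∀ j, 0 < r j) ∧ (∀ j, 0 < rs j) ∧ (∀ j, r j * rs j = ρ)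

/-- The ball `ℬ(z̄, e, r, r*)`, a subset of the incidence manifold
`ℐ = {(x,y) : y_d = x_d - |y' - x'|²} ⊆ ℝ^d × ℝ^d`. -/
def ballI (n : ℕ) (zb : Pt n × Pt n) (e : Fin n → Vec n)
    (r rs : Fin n → ℝ) (ρ : ℝ) : Set (Pt n × Pt n) :=
  fun z => z.2.2 = z.1.2 - ‖z.2.1 - z.1.1‖ ^ 2 ∧
    (∀ j, |⟪z.1.1 - zb.1.1, e j⟫| < r j) ∧
    |z.1.2 - zb.2.2 - ‖z.1.1 - zb.2.1‖ ^ 2| < ρ ∧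
    (∀ j, |⟪z.2.1 - zb.2.1, e j⟫| < rs j) ∧
    |z.2.2 - zb.1.2 + ‖z.2.1 - zb.1.1‖ ^ 2| < ρ

lemma vol_box (n : ℕ) [NeZero n] (e : Fin n → Vec n) (he : Orthonormal ℝ e)
    (c : Vec n) (b : Fin n → ℝ) :
    volume {y : Vec n | ∀ j, |⟪y - c, e j⟫| < b j} =
      ∏ j, ENNReal.ofReal (2 * b j) := by
  have hcard : Fintype.card (Fin n) = Module.finrank ℝ (Vec n) := by
    simp [finrank_euclideanSpace_fin]
  have : Nonempty (Fin n) := Fin.pos_iff_nonempty.mp (Nat.pos_of_ne_zero (NeZero.ne n))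
  let B : OrthonormalBasis (Fin n) ℝ (Vec n) :=
    (basisOfOrthonormalOfCardEqFinrank he hcard).toOrthonormalBasis
      (by rwa [coe_basisOfOrthonormalOfCardEqFinrank])
  have hB : ∀ j, B j = e j := by
    intro j
    simp [B, Module.Basis.coe_toOrthonormalBasis, coe_basisOfOrthonormalOfCardEqFinrank]
  have hset : {y : Vec n | ∀ j, |⟪y - c, e j⟫| < b j} =
      B.repr ⁻¹' (WithLp.ofLp ⁻¹' (Set.univ.pi fun j => Set.Ioo (B.repr c j - b j) (B.repr c j + b j))) := by
    ext y
    simp only [Set.mem_setOf_eq, Set.mem_preimage, Set.mem_pi, Set.mem_univ, true_implies,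
      Set.mem_Ioo]
    constructor
    · intro h j
      simp only [Set.mem_Ioo, B.repr_apply_apply]
      have := h j
      rw [← hB j, real_inner_comm, inner_sub_right, abs_lt] at this
      constructor <;> linarith [this.1, this.2]
    · intro h j
      have := h j
      simp only [Set.mem_Ioo, B.repr_apply_apply] at this
      rw [← hB j, real_inner_comm, inner_sub_right, abs_lt]
      constructor <;> linarith [this.1, this.2]
  rw [hset]
  have hm : MeasurableSet (WithLp.ofLp ⁻¹' (Set.univ.pi fun j => Set.Ioo (B.repr c j - b j) (B.repr c j + b j)) : Set (Vec n)) := by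
    exact (MeasurableSet.univ_pi fun j => measurableSet_Ioo).preimage (by fun_prop)
  rw [B.measurePreserving_repr.measure_preimage hm.nullMeasurableSet]
  have hpre : (WithLp.ofLp : Vec n → (Fin n → ℝ)) ⁻¹'
      (Set.univ.pi fun j => Set.Ioo (B.repr c j - b j) (B.repr c j + b j) : Set (Fin n → ℝ)) =
      (WithLp.ofLp ⁻¹' (Set.univ.pi fun j => Set.Ioo (B.repr c j - b j) (B.repr c j + b j))) := rfl
  rw [← hpre, (PiLp.volume_preserving_ofLp (Fin n)).measure_preimage
    (by exact (MeasurableSet.univ_pi fun j => measurableSet_Ioo).nullMeasurableSet)]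
  rw [volume_pi_pi]
  refine Finset.prod_congr rfl fun j _ => ?_
  rw [Real.volume_Ioo]
  congr 1
  ring


lemma vol_slab (n : ℕ) (B' : Set (Vec n)) (hB' : MeasurableSet B') (g : Vec n → ℝ)
    (hg : Measurable g) (s : ℝ) :
    volume {x : Pt n | x.1 ∈ B' ∧ |x.2 - g x.1| < s} =
      ENNReal.ofReal (2 * s) * volume B' := by
  have hmS : MeasurableSet {x : Pt n | x.1 ∈ B' ∧ |x.2 - g x.1| < s} := by
    have h1 : MeasurableSet {x : Pt n | x.1 ∈ B'} := measurable_fst hB'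
    have h2 : MeasurableSet {x : Pt n | |x.2 - g x.1| < s} := by
      have : Measurable fun x : Pt n => |x.2 - g x.1| :=
        (measurable_snd.sub (hg.comp measurable_fst)).abs
      exact this measurableSet_Iio
    exact h1.inter h2
  rw [Measure.volume_eq_prod, Measure.prod_apply hmS]
  have hfib : ∀ y : Vec n,
      volume (Prod.mk y ⁻¹' {x : Pt n | x.1 ∈ B' ∧ |x.2 - g x.1| < s}) =
      B'.indicator (fun _ => ENNReal.ofReal (2 * s)) y := by
    intro y
    by_cases hy : y ∈ B'
    · have : Prod.mk y ⁻¹' {x : Pt n | x.1 ∈ B' ∧ |x.2 - g x.1| < s} =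
          Set.Ioo (g y - s) (g y + s) := by
        ext z
        simp only [Set.mem_preimage, Set.mem_setOf_eq, Set.mem_Ioo, hy, true_and, abs_lt]
        constructor <;> intro h <;> constructor <;> linarith [h.1, h.2]
      rw [this, Real.volume_Ioo, Set.indicator_of_mem hy]
      congr 1; ring
    · have : Prod.mk y ⁻¹' {x : Pt n | x.1 ∈ B' ∧ |x.2 - g x.1| < s} = ∅ := by
        ext z; simp [hy]
      rw [this, Set.indicator_of_notMem hy, measure_empty]
  rw [lintegral_congr hfib, lintegral_indicator_const hB']


lemma inner_bound (n : ℕ) [NeZero n] {e : Fin n → Vec n} (he : Orthonormal ℝ e)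
    (u w : Vec n) (a b : Fin n → ℝ)
    (hu : ∀ j, |⟪u, e j⟫| ≤ a j) (hw : ∀ j, |⟪w, e j⟫| ≤ b j) :
    |⟪u, w⟫| ≤ ∑ j, a j * b j := by
  have hcard : Fintype.card (Fin n) = Module.finrank ℝ (Vec n) := by
    simp [finrank_euclideanSpace_fin]
  have : Nonempty (Fin n) := Fin.pos_iff_nonempty.mp (Nat.pos_of_ne_zero (NeZero.ne n))
  let B : OrthonormalBasis (Fin n) ℝ (Vec n) :=
    (basisOfOrthonormalOfCardEqFinrank he hcard).toOrthonormalBasis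
      (by rwa [coe_basisOfOrthonormalOfCardEqFinrank])
  have hB : ∀ j, B j = e j := by
    intro j
    simp [B, Module.Basis.coe_toOrthonormalBasis, coe_basisOfOrthonormalOfCardEqFinrank]
  rw [← B.sum_inner_mul_inner u w]
  refine (Finset.abs_sum_le_sum_abs _ _).trans ?_
  refine Finset.sum_le_sum fun j _ => ?_
  rw [abs_mul]
  have h1 : |⟪u, B j⟫| ≤ a j := by rw [hB]; exact hu j
  have h2 : |⟪B j, w⟫| ≤ b j := by rw [hB, real_inner_comm]; exact hw j
  exact mul_le_mul h1 h2 (abs_nonneg _) ((abs_nonneg _).trans h1)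


lemma keyMem (n : ℕ) (hn : 1 ≤ n) (zb : Pt n × Pt n) (e : Fin n → Vec n)
    (r rs : Fin n → ℝ) (ρ : ℝ) (h : IsBallParams n zb e r rs ρ) (x : Pt n)
    (hx1 : ∀ j, |⟪x.1 - zb.1.1, e j⟫| < r j)
    (hx2 : |x.2 - (zb.2.2 + ‖x.1 - zb.2.1‖ ^ 2)| < ρ / 2)
    (t : Vec n) (ht : ∀ j, |⟪t - (x.1 - zb.2.1), e j⟫| < rs j / (8 * (n : ℝ))) :
    (x, (x.1 - t, x.2 - ‖t‖ ^ 2)) ∈ ballI n zb e r rs ρ := by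
  obtain ⟨hz, hρ, he, hr, hrs, hrrs⟩ := h
  have : NeZero n := ⟨by omega⟩
  have hn' : (1 : ℝ) ≤ (n : ℝ) := by exact_mod_cast hn
  refine ⟨?_, hx1, ?_, ?_, ?_⟩
  · have h1 : x.1 - t - x.1 = -t := by abel
    rw [h1, norm_neg]
  · rw [show x.2 - zb.2.2 - ‖x.1 - zb.2.1‖ ^ 2 = x.2 - (zb.2.2 + ‖x.1 - zb.2.1‖ ^ 2) by ring]
    linarith [hx2, abs_nonneg (x.2 - (zb.2.2 + ‖x.1 - zb.2.1‖ ^ 2))]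
  · intro j
    have h1 : x.1 - t - zb.2.1 = -(t - (x.1 - zb.2.1)) := by abel
    rw [h1, inner_neg_left, abs_neg]
    have h2 := ht j
    have h3 : rs j / (8 * (n : ℝ)) ≤ rs j := by
      rw [div_le_iff₀ (by positivity)]
      nlinarith [hrs j]
    linarith
  · -- the last condition
    have hnormexp : ‖x.1 - t - zb.1.1‖ ^ 2 =
        ‖x.1 - zb.1.1‖ ^ 2 - 2 * ⟪x.1 - zb.1.1, t⟫ + ‖t‖ ^ 2 := by
      have h1 : x.1 - t - zb.1.1 = (x.1 - zb.1.1) - t := by abel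
      rw [h1, @norm_sub_sq_real]
    have hnorm2 : ‖zb.2.1 - zb.1.1‖ ^ 2 =
        ‖x.1 - zb.1.1‖ ^ 2 - 2 * ⟪x.1 - zb.1.1, x.1 - zb.2.1⟫ + ‖x.1 - zb.2.1‖ ^ 2 := by
      have h1 : zb.2.1 - zb.1.1 = (x.1 - zb.1.1) - (x.1 - zb.2.1) := by abel
      rw [h1, @norm_sub_sq_real]
    have hinner : ⟪x.1 - zb.1.1, t - (x.1 - zb.2.1)⟫ =
        ⟪x.1 - zb.1.1, t⟫ - ⟪x.1 - zb.1.1, x.1 - zb.2.1⟫ := inner_sub_right _ _ _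
    have hkey : x.2 - ‖t‖ ^ 2 - zb.1.2 + ‖x.1 - t - zb.1.1‖ ^ 2 =
        (x.2 - (zb.2.2 + ‖x.1 - zb.2.1‖ ^ 2)) - 2 * ⟪x.1 - zb.1.1, t - (x.1 - zb.2.1)⟫ := by
      rw [hnormexp, hinner, hz]
      linarith [hnorm2]
    rw [hkey]
    have hib : |⟪x.1 - zb.1.1, t - (x.1 - zb.2.1)⟫| ≤ ∑ j : Fin n, r j * (rs j / (8 * (n : ℝ))) :=
      inner_bound n he _ _ _ _ (fun j => (hx1 j).le) (fun j => (ht j).le)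
    have hsum : ∑ j : Fin n, r j * (rs j / (8 * (n : ℝ))) = ρ / 8 := by
      have : ∀ j ∈ Finset.univ, r j * (rs j / (8 * (n : ℝ))) = ρ / (8 * (n : ℝ)) := by
        intro j _
        rw [← hrrs j]
        field_simp
      rw [Finset.sum_congr rfl this, Finset.sum_const, Finset.card_univ, Fintype.card_fin,
        nsmul_eq_mul]
      field_simp
    rw [hsum] at hib
    have := abs_sub_abs_le_abs_sub (x.2 - (zb.2.2 + ‖x.1 - zb.2.1‖ ^ 2))
      (2 * ⟪x.1 - zb.1.1, t - (x.1 - zb.2.1)⟫)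
    calc |(x.2 - (zb.2.2 + ‖x.1 - zb.2.1‖ ^ 2)) - 2 * ⟪x.1 - zb.1.1, t - (x.1 - zb.2.1)⟫|
        ≤ |x.2 - (zb.2.2 + ‖x.1 - zb.2.1‖ ^ 2)| + |2 * ⟪x.1 - zb.1.1, t - (x.1 - zb.2.1)⟫| :=
          abs_sub _ _
      _ < ρ := by
          rw [abs_mul]
          have : |(2:ℝ)| = 2 := by norm_num
          rw [this]
          linarith


lemma isOpen_box (n : ℕ) (e : Fin n → Vec n) (c : Vec n) (b : Fin n → ℝ) :
    IsOpen {y : Vec n | ∀ j, |⟪y - c, e j⟫| < b j} := by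
  have : {y : Vec n | ∀ j, |⟪y - c, e j⟫| < b j} =
      ⋂ j, {y : Vec n | |⟪y - c, e j⟫| < b j} := by ext y; simp
  rw [this]
  refine isOpen_iInter_of_finite fun j => ?_
  have hc : Continuous fun y : Vec n => |⟪y - c, e j⟫| :=
    ((continuous_id.sub continuous_const).inner continuous_const).abs
  exact isOpen_lt hc continuous_const


lemma mainbound (n : ℕ) (hn : 1 ≤ n) (zb : Pt n × Pt n) (e : Fin n → Vec n)
    (r rs : Fin n → ℝ) (ρ : ℝ) (h : IsBallParams n zb e r rs ρ) :
    ENNReal.ofReal ((1 / (2 * (n : ℝ))) ^ n / 4 ^ (n + 1)) *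
        volume (Prod.fst '' ballI n zb e r rs ρ) ^ (((n : ℝ) + 1) / ((n : ℝ) + 2)) *
        volume (Prod.snd '' ballI n zb e r rs ρ) ^ (((n : ℝ) + 1) / ((n : ℝ) + 2)) ≤
      incT n (Prod.fst '' ballI n zb e r rs ρ) (Prod.snd '' ballI n zb e r rs ρ) := by
  obtain ⟨hz, hρ, he, hr, hrs, hrrs⟩ := h
  have hNZ : NeZero n := ⟨by omega⟩
  have hn' : (1 : ℝ) ≤ (n : ℝ) := by exact_mod_cast hn
  set p : ℝ := ((n : ℝ) + 1) / ((n : ℝ) + 2) with hpdef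
  have hp0 : 0 ≤ p := by positivity
  have hp1 : p ≤ 1 := by
    rw [hpdef, div_le_one (by positivity)]; linarith
  set c0 : ℝ := (1 / (2 * (n : ℝ))) ^ n / 4 ^ (n + 1) with hc0def
  have hc0 : 0 < c0 := by
    apply div_pos (pow_pos (by positivity) n) (by positivity)
  set F := Prod.fst '' ballI n zb e r rs ρ with hF
  set Fs := Prod.snd '' ballI n zb e r rs ρ with hFs
  set Bset := {y : Vec n | ∀ j, |⟪y - zb.1.1, e j⟫| < r j} with hBset
  set Bsets := {y : Vec n | ∀ j, |⟪y - zb.2.1, e j⟫| < rs j} with hBsets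
  set gE : Vec n → ℝ := fun y => zb.2.2 + ‖y - zb.2.1‖ ^ 2 with hgE
  set gEs : Vec n → ℝ := fun y => zb.1.2 - ‖y - zb.1.1‖ ^ 2 with hgEs
  have hgEm : Measurable gE := by
    apply Continuous.measurable
    exact continuous_const.add (((continuous_id.sub continuous_const).norm).pow 2)
  have hgEsm : Measurable gEs := by
    apply Continuous.measurable
    exact continuous_const.sub (((continuous_id.sub continuous_const).norm).pow 2)
  have hBm : MeasurableSet Bset := (isOpen_box n e zb.1.1 r).measurableSet
  have hBsm : MeasurableSet Bsets := (isOpen_box n e zb.2.1 rs).measurableSet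
  set P : ℝ := ∏ j, (2 * r j) with hPdef
  set Q : ℝ := ∏ j, (2 * rs j) with hQdef
  set Kr : ℝ := ∏ j, (2 * (rs j / (8 * (n : ℝ)))) with hKrdef
  have hP : 0 < P := Finset.prod_pos fun j _ => by linarith [hr j]
  have hQ : 0 < Q := Finset.prod_pos fun j _ => by linarith [hrs j]
  have hKr : 0 < Kr := Finset.prod_pos fun j _ => by
    have := hrs j
    positivity
  have hBvol : volume Bset = ENNReal.ofReal P := by
    rw [hBset, vol_box n e he, hPdef,
      ENNReal.ofReal_prod_of_nonneg fun j _ => by linarith [hr j]]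
  have hBsvol : volume Bsets = ENNReal.ofReal Q := by
    rw [hBsets, vol_box n e he, hQdef,
      ENNReal.ofReal_prod_of_nonneg fun j _ => by linarith [hrs j]]
  -- upper bounds for projections
  have hsub1 : F ⊆ {x : Pt n | x.1 ∈ Bset ∧ |x.2 - gE x.1| < ρ} := by
    rintro x ⟨z, hzmem, rfl⟩
    obtain ⟨h1, h2, h3, h4, h5⟩ := hzmem
    refine ⟨h2, ?_⟩
    rw [hgE, show z.1.2 - (zb.2.2 + ‖z.1.1 - zb.2.1‖ ^ 2) =
      z.1.2 - zb.2.2 - ‖z.1.1 - zb.2.1‖ ^ 2 from by ring]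
    exact h3
  have hsub2 : Fs ⊆ {x : Pt n | x.1 ∈ Bsets ∧ |x.2 - gEs x.1| < ρ} := by
    rintro x ⟨z, hzmem, rfl⟩
    obtain ⟨h1, h2, h3, h4, h5⟩ := hzmem
    refine ⟨h4, ?_⟩
    rw [hgEs, show z.2.2 - (zb.1.2 - ‖z.2.1 - zb.1.1‖ ^ 2) =
      z.2.2 - zb.1.2 + ‖z.2.1 - zb.1.1‖ ^ 2 from by ring]
    exact h5
  have hvolF : volume F ≤ ENNReal.ofReal (2 * ρ * P) := by
    refine (measure_mono hsub1).trans (le_of_eq ?_)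
    rw [vol_slab n Bset hBm gE hgEm ρ, hBvol, ← ENNReal.ofReal_mul (by linarith)]
  have hvolFs : volume Fs ≤ ENNReal.ofReal (2 * ρ * Q) := by
    refine (measure_mono hsub2).trans (le_of_eq ?_)
    rw [vol_slab n Bsets hBsm gEs hgEsm ρ, hBsvol, ← ENNReal.ofReal_mul (by linarith)]
  -- the small set E'
  set E' := {x : Pt n | x.1 ∈ Bset ∧ |x.2 - gE x.1| < ρ / 2} with hE'
  have hE'm : MeasurableSet E' := by
    have h1 : MeasurableSet {x : Pt n | x.1 ∈ Bset} := measurable_fst hBm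
    have h2 : MeasurableSet {x : Pt n | |x.2 - gE x.1| < ρ / 2} := by
      have : Measurable fun x : Pt n => |x.2 - gE x.1| :=
        (measurable_snd.sub (hgEm.comp measurable_fst)).abs
      exact this measurableSet_Iio
    exact h1.inter h2
  have hE'vol : volume E' = ENNReal.ofReal (2 * (ρ / 2) * P) := by
    rw [hE', vol_slab n Bset hBm gE hgEm (ρ / 2), hBvol, ← ENNReal.ofReal_mul (by linarith)]
  have hsub3 : E' ⊆ F := by
    intro x hx
    refine ⟨(x, (x.1 - (x.1 - zb.2.1), x.2 - ‖x.1 - zb.2.1‖ ^ 2)), ?_, rfl⟩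
    refine keyMem n hn zb e r rs ρ ⟨hz, hρ, he, hr, hrs, hrrs⟩ x hx.1 hx.2
      (x.1 - zb.2.1) fun j => ?_
    rw [sub_self]
    have h0 : ⟪(0 : Vec n), e j⟫ = 0 := inner_zero_left _
    rw [h0, abs_zero]
    have := hrs j
    positivity
  -- pointwise lower bound for radonT on E'
  have hpoint : ∀ x ∈ E', ENNReal.ofReal Kr ≤ radonT n (Fs.indicator 1) x := by
    intro x hx
    set tb := {t : Vec n | ∀ j, |⟪t - (x.1 - zb.2.1), e j⟫| < rs j / (8 * (n : ℝ))} with htb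
    have htbm : MeasurableSet tb := (isOpen_box n e _ _).measurableSet
    have htbvol : volume tb = ENNReal.ofReal Kr := by
      rw [htb, vol_box n e he, hKrdef,
        ENNReal.ofReal_prod_of_nonneg fun j _ => by
          have h1 := hrs j
          positivity]
    have hmono : ∀ t, tb.indicator (fun _ => (1 : ℝ≥0∞)) t ≤
        Fs.indicator 1 (x.1 - t, x.2 - ‖t‖ ^ 2) := by
      intro t
      by_cases ht : t ∈ tb
      · rw [Set.indicator_of_mem ht]
        have hmem : (x.1 - t, x.2 - ‖t‖ ^ 2) ∈ Fs :=
          ⟨(x, (x.1 - t, x.2 - ‖t‖ ^ 2)),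
            keyMem n hn zb e r rs ρ ⟨hz, hρ, he, hr, hrs, hrrs⟩ x hx.1 hx.2 t ht, rfl⟩
        rw [Set.indicator_of_mem hmem]
        exact le_refl _
      · rw [Set.indicator_of_notMem ht]
        exact zero_le
    calc ENNReal.ofReal Kr = volume tb := htbvol.symm
      _ = ∫⁻ t, tb.indicator (fun _ => (1 : ℝ≥0∞)) t := by
          rw [lintegral_indicator_const htbm, one_mul]
      _ ≤ ∫⁻ t, Fs.indicator 1 (x.1 - t, x.2 - ‖t‖ ^ 2) := lintegral_mono hmono
      _ = radonT n (Fs.indicator 1) x := rfl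
  -- chain of inequalities
  have hKE' : ENNReal.ofReal Kr * volume E' ≤ incT n F Fs := by
    calc ENNReal.ofReal Kr * volume E' = ∫⁻ _ in E', ENNReal.ofReal Kr ∂volume :=
          (setLIntegral_const E' _).symm
      _ ≤ ∫⁻ x in E', radonT n (Fs.indicator 1) x ∂volume :=
          setLIntegral_mono' hE'm hpoint
      _ ≤ ∫⁻ x in F, radonT n (Fs.indicator 1) x ∂volume :=
          lintegral_mono' (Measure.restrict_mono hsub3 le_rfl) le_rfl
      _ = incT n F Fs := rfl
  -- real-number arithmetic
  have hPQ : (2 * ρ * P) * (2 * ρ * Q) = 4 ^ (n + 1) * ρ ^ (n + 2) := by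
    have h1 : P * Q = (4 * ρ) ^ n := by
      rw [hPdef, hQdef, ← Finset.prod_mul_distrib,
        Finset.prod_congr rfl fun j _ => show (2 * r j) * (2 * rs j) = 4 * ρ from by
          rw [← hrrs j]; ring,
        Finset.prod_const, Finset.card_univ, Fintype.card_fin]
    have h2 : (2 * ρ * P) * (2 * ρ * Q) = 4 * ρ ^ 2 * (P * Q) := by ring
    rw [h2, h1, mul_pow]
    ring
  have hρp : ((ρ : ℝ) ^ (n + 2)) ^ p = ρ ^ (n + 1) := by
    rw [← Real.rpow_natCast ρ (n + 2), ← Real.rpow_mul hρ.le, ← Real.rpow_natCast ρ (n + 1)]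
    congr 1
    rw [hpdef]
    push_cast
    field_simp
  have h4le : (((4 : ℝ) ^ (n + 1)) : ℝ) ^ p ≤ 4 ^ (n + 1) := by
    have h1 : (1 : ℝ) ≤ 4 ^ (n + 1) := one_le_pow₀ (by norm_num)
    calc ((4 : ℝ) ^ (n + 1)) ^ p ≤ ((4 : ℝ) ^ (n + 1)) ^ (1 : ℝ) :=
          Real.rpow_le_rpow_of_exponent_le h1 hp1
      _ = 4 ^ (n + 1) := Real.rpow_one _
  have hKP : Kr * P = (ρ / (2 * (n : ℝ))) ^ n := by
    rw [hKrdef, hPdef, ← Finset.prod_mul_distrib,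
      Finset.prod_congr rfl fun j _ =>
        show (2 * (rs j / (8 * (n : ℝ)))) * (2 * r j) = ρ / (2 * (n : ℝ)) from by
          rw [← hrrs j]
          have hn0 : (n : ℝ) ≠ 0 := by positivity
          field_simp
          ring,
      Finset.prod_const, Finset.card_univ, Fintype.card_fin]
  have hreal : c0 * ((2 * ρ * P) ^ p * (2 * ρ * Q) ^ p) ≤ Kr * (2 * (ρ / 2) * P) := by
    have hA : (2 * ρ * P) ^ p * (2 * ρ * Q) ^ p = ((2 * ρ * P) * (2 * ρ * Q)) ^ p :=
      (Real.mul_rpow (by positivity) (by positivity)).symm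
    rw [hA, hPQ, Real.mul_rpow (by positivity) (by positivity), hρp]
    calc c0 * (((4 : ℝ) ^ (n + 1)) ^ p * ρ ^ (n + 1))
        ≤ c0 * (4 ^ (n + 1) * ρ ^ (n + 1)) := by
          apply mul_le_mul_of_nonneg_left
            (mul_le_mul_of_nonneg_right h4le (by positivity)) hc0.le
      _ = (1 / (2 * (n : ℝ))) ^ n * ρ ^ (n + 1) := by
          rw [hc0def]
          field_simp
      _ = Kr * (2 * (ρ / 2) * P) := by
          rw [show Kr * (2 * (ρ / 2) * P) = (Kr * P) * ρ from by ring, hKP,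
            show ρ / (2 * (n : ℝ)) = ρ * (1 / (2 * (n : ℝ))) from by ring, mul_pow]
          ring
  -- put it together
  calc ENNReal.ofReal c0 * volume F ^ p * volume Fs ^ p
      ≤ ENNReal.ofReal c0 * ENNReal.ofReal (2 * ρ * P) ^ p *
          ENNReal.ofReal (2 * ρ * Q) ^ p := by
        gcongr
    _ = ENNReal.ofReal (c0 * ((2 * ρ * P) ^ p * (2 * ρ * Q) ^ p)) := by
        rw [ENNReal.ofReal_rpow_of_pos (by positivity),
          ENNReal.ofReal_rpow_of_pos (by positivity),
          ← ENNReal.ofReal_mul hc0.le, ← ENNReal.ofReal_mul (by positivity), mul_assoc]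
    _ ≤ ENNReal.ofReal (Kr * (2 * (ρ / 2) * P)) := ENNReal.ofReal_le_ofReal hreal
    _ = ENNReal.ofReal Kr * volume E' := by
        rw [hE'vol, ← ENNReal.ofReal_mul hKr.le]
    _ ≤ incT n F Fs := hKE'

/-- every pair `(π(ℬ), π*(ℬ))` is `c₀`-quasiextremal,
uniformly over all balls `ℬ`. -/
theorem stmt2 (d : ℕ) (hd : 2 ≤ d) :
    ∃ c₀ : ℝ, 0 < c₀ ∧
      ∀ (zb : Pt (d - 1) × Pt (d - 1)) (e : Fin (d - 1) → Vec (d - 1))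
        (r rs : Fin (d - 1) → ℝ) (ρ : ℝ), IsBallParams (d - 1) zb e r rs ρ →
        ENNReal.ofReal c₀ *
            volume (Prod.fst '' ballI (d - 1) zb e r rs ρ) ^ ((d : ℝ) / (d + 1)) *
            volume (Prod.snd '' ballI (d - 1) zb e r rs ρ) ^ ((d : ℝ) / (d + 1)) ≤
          incT (d - 1) (Prod.fst '' ballI (d - 1) zb e r rs ρ)
            (Prod.snd '' ballI (d - 1) zb e r rs ρ) := by
  refine ⟨(1 / (2 * ((d - 1 : ℕ) : ℝ))) ^ (d - 1) / 4 ^ ((d - 1) + 1), ?_, ?_⟩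
  · have h1 : (0 : ℝ) < ((d - 1 : ℕ) : ℝ) := by
      exact_mod_cast (by omega : 0 < d - 1)
    exact div_pos (pow_pos (div_pos one_pos (by linarith)) _) (by positivity)
  · intro zb e r rs ρ h
    have hcast : ((d - 1 : ℕ) : ℝ) = (d : ℝ) - 1 := by
      have h1 : (1 : ℕ) ≤ d := by omega
      push_cast [h1]
      ring
    have hp : ((d : ℝ)) / ((d : ℝ) + 1) =
        (((d - 1 : ℕ) : ℝ) + 1) / (((d - 1 : ℕ) : ℝ) + 2) := by
      rw [hcast]
      ring_nf
    rw [hp]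
    exact mainbound (d - 1) (by omega) zb e r rs ρ h
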